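/- For integers 0 ≤ L < n, ∑_{k=0}^{n-L-1} C(n-L-1, k) / C(n-1, L+k) = n/(L+1). -/

import Mathlib

open Finset

theorem binom_sum_identity_shapley (n L : ℕ) (hL : L < n) :
    ∑ k ∈ Finset.range (n - L),
        (Nat.choose (n - L - 1) k : ℝ) / (Nat.choose (n - 1) (L + k) : ℝ)
      = (n : ℝ) / ((L : ℝ) + 1) := by
  obtain ⟨r, rfl⟩ : ∃ r, n = L + r + 1 := ⟨n - L - 1, by omega⟩
  have h1 : L + r + 1 - L = r + 1 := by omega
  have h2 : L + r + 1 - L - 1 = r := by omega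
  have h3 : L + r + 1 - 1 = L + r := by omega
  rw [h1, h3]; simp only [Nat.add_sub_cancel]
  have hden : ((L + r).choose L : ℝ) ≠ 0 := by
    exact_mod_cast Nat.choose_pos (by omega : L ≤ L + r) |>.ne'
  have hterm : ∀ k ∈ Finset.range (r + 1),
      (Nat.choose r k : ℝ) / (Nat.choose (L + r) (L + k) : ℝ)
        = (Nat.choose (L + k) L : ℝ) / (Nat.choose (L + r) L : ℝ) := by
    intro k hk
    rw [Finset.mem_range] at hk
    have hk' : k ≤ r := by omega
    have hne : ((L + r).choose (L + k) : ℝ) ≠ 0 := by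
      exact_mod_cast Nat.choose_pos (by omega : L + k ≤ L + r) |>.ne'
    rw [div_eq_div_iff hne hden]
    have := Nat.choose_mul (n := L + r) (show L ≤ L + k by omega)
    simp only [Nat.add_sub_cancel_left] at this
    exact_mod_cast by rw [mul_comm, ← this, mul_comm]
  rw [Finset.sum_congr rfl hterm, ← Finset.sum_div]
  have hsum : ∑ k ∈ Finset.range (r + 1), (L + k).choose L = (L + r + 1).choose (L + 1) := by
    rw [← Nat.sum_Icc_choose (L + r) L, ← Finset.Ico_add_one_right_eq_Icc, Finset.sum_Ico_eq_sum_range]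
    have h4 : L + r + 1 - L = r + 1 := by omega
    rw [h4]
  have hsum' : ∑ k ∈ Finset.range (r + 1), ((L + k).choose L : ℝ)
      = ((L + r + 1).choose (L + 1) : ℝ) := by exact_mod_cast congrArg (Nat.cast (R := ℝ)) hsum
  rw [hsum', div_eq_div_iff hden (by positivity : ((L : ℝ) + 1) ≠ 0)]
  have := Nat.add_one_mul_choose_eq (L + r) L
  exact_mod_cast this.symm
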